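/- Under the inter-cluster common influence assumption, if the quotient graph 𝔾 contains a directed spanning tree whose root node corresponds to a subgraph G_i that itself contains a directed spanning tree, then the full graph G contains a directed spanning tree. -/

import Mathlib

/-- Under the inter-cluster common influence assumption (if the quotient
graph has an edge `j → i` then every node of cluster `i` receives an edge from cluster
`j`), if the quotient graph contains a directed spanning tree rooted at a cluster `i0`
whose induced subgraph itself contains a directed spanning tree, then the full graph
contains a directed spanning tree. -/
theorem stmt9 (L N : ℕ) (adj : Fin L → Fin L → Prop)
    (c : Fin L → Fin N) (hc : Function.Surjective c)
    (qadj : Fin N → Fin N → Prop)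
    (hq : ∀ j i, qadj j i ↔ ∃ k l, c k = j ∧ c l = i ∧ adj k l)
    (hci : ∀ j i, j ≠ i → qadj j i → ∀ v, c v = i → ∃ k, c k = j ∧ adj k v)
    (i0 : Fin N)
    (hroot : ∀ j, Relation.ReflTransGen qadj i0 j)
    (hsub : ∃ r, c r = i0 ∧ ∀ v, c v = i0 →
        Relation.ReflTransGen (fun a b => c a = i0 ∧ c b = i0 ∧ adj a b) r v) :
    ∃ r, ∀ v, Relation.ReflTransGen adj r v := by
  obtain ⟨r, hr, hr2⟩ := hsub
  refine ⟨r, fun v => ?_⟩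
  have key : ∀ j, Relation.ReflTransGen qadj i0 j →
      ∀ v, c v = j → Relation.ReflTransGen adj r v := by
    intro j h
    induction h with
    | refl =>
      intro v hv
      exact Relation.ReflTransGen.mono (fun a b h => h.2.2) r v (hr2 v hv)
    | tail h' hedge ih =>
      rename_i b j
      intro v hv
      by_cases hbj : b = j
      · exact ih v (hv.trans hbj.symm)
      · obtain ⟨k, hk, hkv⟩ := hci b j hbj hedge v hv
        exact (ih k hk).tail hkv
  exact key (c v) (hroot (c v)) v rfl
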